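/- Consider the two-player one-dimensional Battling Influencers Game with action set 𝒳 = [a,b] (a < b), receiver x̂ = (x_1 + x_2)/2, and targets satisfying t_1 < (a+b)/2 and t_2 > (a+b)/2, where player i's loss is ℓ_i(x_1,x_2) = ((x_1+x_2)/2 − t_i)². Then (x_1, x_2) = (a, b) is the unique pure Nash equilibrium: it is a pure Nash equilibrium, and every pure Nash equilibrium equals (a, b). -/
import Mathlib


noncomputable section

/-- Player `i`'s loss in the two-player one-dimensional Battling Influencers
Game with receiver `x̂ = (x₁ + x₂)/2` and target `t`:
`ℓ(x₁, x₂) = ((x₁ + x₂)/2 − t)²`. -/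
def loss1D (t x1 x2 : ℝ) : ℝ := ((x1 + x2) / 2 - t) ^ 2

/-- `(x₁, x₂)` is a pure Nash equilibrium of the two-player one-dimensional
Battling Influencers Game on `𝒳 = [a, b]` with targets `t₁, t₂`. -/
def IsPureNE1D (a b t1 t2 x1 x2 : ℝ) : Prop :=
  x1 ∈ Set.Icc a b ∧ x2 ∈ Set.Icc a b ∧
    (∀ y ∈ Set.Icc a b, loss1D t1 x1 x2 ≤ loss1D t1 y x2) ∧
    (∀ y ∈ Set.Icc a b, loss1D t2 x1 x2 ≤ loss1D t2 x1 y)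

/-- If player 1 plays a best response and `x1 > a`, then `x1 + x2 ≤ 2 t1`. -/
lemma p1_aux (a b t1 x1 x2 : ℝ) (hx1 : x1 ∈ Set.Icc a b) (hx2 : x2 ∈ Set.Icc a b)
    (h1 : ∀ y ∈ Set.Icc a b, loss1D t1 x1 x2 ≤ loss1D t1 y x2)
    (hx1a : a < x1) : x1 + x2 ≤ 2 * t1 := by
  by_contra hs
  push_neg at hs
  rcases le_total (2 * t1 - x2) a with hc | hc
  · have := h1 a ⟨le_refl a, le_trans hx1a.le hx1.2⟩
    simp only [loss1D] at this
    nlinarith [this]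
  · have hyb : 2 * t1 - x2 ≤ b := by linarith [hx1.2]
    have := h1 (2 * t1 - x2) ⟨hc, hyb⟩
    simp only [loss1D] at this
    nlinarith [this]

/-- If player 2 plays a best response and `x2 < b`, then `2 t2 ≤ x1 + x2`. -/
lemma p2_aux (a b t2 x1 x2 : ℝ) (hx1 : x1 ∈ Set.Icc a b) (hx2 : x2 ∈ Set.Icc a b)
    (h2 : ∀ y ∈ Set.Icc a b, loss1D t2 x1 x2 ≤ loss1D t2 x1 y)
    (hx2b : x2 < b) : 2 * t2 ≤ x1 + x2 := by
  by_contra hs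
  push_neg at hs
  rcases le_total b (2 * t2 - x1) with hc | hc
  · have := h2 b ⟨le_trans hx2.1 hx2b.le, le_refl b⟩
    simp only [loss1D] at this
    nlinarith [this]
  · have hya : a ≤ 2 * t2 - x1 := by linarith [hx2.1]
    have := h2 (2 * t2 - x1) ⟨hya, hc⟩
    simp only [loss1D] at this
    nlinarith [this]

/-- With `a < b`, `t₁ < (a+b)/2 < t₂`, the pair `(a, b)` is the unique pure Nash
equilibrium of the two-player one-dimensional Battling Influencers Game:
both players maximally exaggerate. -/
theorem opposite_targets_unique_pNE (a b t1 t2 : ℝ) (hab : a < b)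
    (ht1 : t1 < (a + b) / 2) (ht2 : (a + b) / 2 < t2) :
    IsPureNE1D a b t1 t2 a b ∧
      ∀ x1 x2 : ℝ, IsPureNE1D a b t1 t2 x1 x2 → x1 = a ∧ x2 = b := by
  constructor
  · refine ⟨⟨le_refl a, hab.le⟩, ⟨hab.le, le_refl b⟩, ?_, ?_⟩
    · intro y hy
      simp only [loss1D]
      nlinarith [hy.1, hy.2]
    · intro y hy
      simp only [loss1D]
      nlinarith [hy.1, hy.2]
  · rintro x1 x2 ⟨hx1, hx2, h1, h2⟩
    have hx1a : x1 = a := by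
      by_contra h
      have hlt : a < x1 := lt_of_le_of_ne hx1.1 (Ne.symm h)
      have hs1 := p1_aux a b t1 x1 x2 hx1 hx2 h1 hlt
      have hx2b : x2 < b := by linarith [hx1.1]
      have hs2 := p2_aux a b t2 x1 x2 hx1 hx2 h2 hx2b
      linarith
    have hx2b : x2 = b := by
      by_contra h
      have hlt : x2 < b := lt_of_le_of_ne hx2.2 h
      have hs2 := p2_aux a b t2 x1 x2 hx1 hx2 h2 hlt
      rw [hx1a] at hs2
      linarith
    exact ⟨hx1a, hx2b⟩

end
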